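/- Let T be a Tychonoff space and χ a Hermitian character on C(T). For any finitely many φ₁,…,φₛ ∈ C(T), there exists t ∈ T with φᵢ(t) = χ(φᵢ) for all i. In particular, the image of T under the Dirac map is dense in X*(C(T)). -/

import Mathlib

/-- Evaluation at a point, as a Hermitian character of `C(T, ℂ)`. -/
noncomputable def diracChar (T : Type*) [TopologicalSpace T] (t : T) : C(T, ℂ) →⋆ₐ[ℂ] ℂ where
  toFun φ := φ t
  map_one' := rfl
  map_mul' _ _ := rfl
  map_zero' := rfl
  map_add' _ _ := rfl
  commutes' _ := rfl
  map_star' _ := rfl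

/-- The Hermitian character space of `C(T, ℂ)` with the topology of pointwise convergence. -/
def HermCharSpace (T : Type*) [TopologicalSpace T] : Type _ :=
  {f : C(T, ℂ) → ℂ // ∃ χ : C(T, ℂ) →⋆ₐ[ℂ] ℂ, f = ⇑χ}

noncomputable instance (T : Type*) [TopologicalSpace T] : TopologicalSpace (HermCharSpace T) :=
  instTopologicalSpaceSubtype

/-- The Dirac map `T → X*(C(T))`. -/
noncomputable def dirac (T : Type*) [TopologicalSpace T] (t : T) : HermCharSpace T :=
  ⟨⇑(diracChar T t), ⟨diracChar T t, rfl⟩⟩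

/-- given a Hermitian character `χ` on `C(T)` and finitely many functions
`φ₁, …, φₛ`, there is a point `t ∈ T` with `φᵢ(t) = χ(φᵢ)` for all `i`; in particular, the
image of `T` under the Dirac map is dense in `X*(C(T))`. -/

private theorem key_eval {T : Type*} [TopologicalSpace T] (χ : C(T, ℂ) →⋆ₐ[ℂ] ℂ) (s : ℕ)
    (φ : Fin s → C(T, ℂ)) : ∃ t : T, ∀ i : Fin s, φ i t = χ (φ i) := by
  set g : Fin s → C(T, ℂ) := fun i => φ i - algebraMap ℂ C(T, ℂ) (χ (φ i)) with hg
  have hχg : ∀ i, χ (g i) = 0 := by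
    intro i
    simp [hg, map_sub, AlgHomClass.commutes]
  set ψ : C(T, ℂ) := ∑ i, star (g i) * g i with hψ
  have hχψ : χ ψ = 0 := by
    simp [hψ, map_sum, map_mul, map_star, hχg]
  have hzero : ∃ t, ψ t = 0 := by
    by_contra h
    push_neg at h
    have : IsUnit ψ := (ContinuousMap.isUnit_iff_forall_ne_zero ψ).2 h
    have := this.map χ
    rw [hχψ] at this
    exact this.ne_zero rfl
  obtain ⟨t, ht⟩ := hzero
  have hψt : ∑ i, (Complex.normSq (g i t) : ℂ) = 0 := by
    rw [← ht]
    simp [hψ, Complex.normSq_eq_conj_mul_self]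
  have hre : ∑ i, Complex.normSq (g i t) = 0 := by
    exact_mod_cast hψt
  refine ⟨t, fun i => ?_⟩
  have h0 : Complex.normSq (g i t) = 0 :=
    (Finset.sum_eq_zero_iff_of_nonneg (fun i _ => Complex.normSq_nonneg _)).1 hre i (Finset.mem_univ i)
  have : g i t = 0 := Complex.normSq_eq_zero.1 h0
  have := sub_eq_zero.1 (by simpa [hg] using this)
  simpa using this

theorem character_is_locally_evaluation (T : Type*) [TopologicalSpace T] [T2Space T]
    [CompletelyRegularSpace T] :
    (∀ (χ : C(T, ℂ) →⋆ₐ[ℂ] ℂ) (s : ℕ) (φ : Fin s → C(T, ℂ)),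
      ∃ t : T, ∀ i : Fin s, φ i t = χ (φ i)) ∧
    Dense (Set.range (dirac T)) := by
  refine ⟨fun χ s φ => key_eval χ s φ, ?_⟩
  intro x
  rw [mem_closure_iff_nhds]
  intro U hU
  obtain ⟨χ, hχ⟩ := x.2
  erw [nhds_subtype, Filter.mem_comap] at hU
  obtain ⟨V, hV, hVU⟩ := hU
  rw [nhds_pi, Filter.mem_pi] at hV
  obtain ⟨I, hIfin, w, hw, hwV⟩ := hV
  set F := hIfin.toFinset with hF
  set φf : Fin F.card → C(T, ℂ) := fun i => (F.equivFin.symm i : C(T, ℂ)) with hφf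
  obtain ⟨t, ht⟩ := key_eval χ F.card φf
  refine ⟨dirac T t, hVU ?_, Set.mem_range_self t⟩
  apply hwV
  intro φ hφ
  have hφF : φ ∈ F := hF ▸ hIfin.mem_toFinset.2 hφ
  have := ht (F.equivFin ⟨φ, hφF⟩)
  simp only [hφf, Equiv.symm_apply_apply] at this
  have hxφ : x.1 φ = χ φ := by rw [hχ]
  show (dirac T t).1 φ ∈ w φ
  have : (dirac T t).1 φ = x.1 φ := by
    rw [hxφ]; exact this
  rw [this]
  exact mem_of_mem_nhds (hw φ)
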